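/- Consider a random bipartite graph with L left nodes and R right nodes, where each left node independently connects to d distinct right nodes chosen uniformly at random. Then the right node degrees Z_1, ..., Z_R are negatively associated. -/

import Mathlib

open MeasureTheory in
/-- Random variables `X i` are negatively associated under `μ`: for any disjoint index sets
`I, J` and any two concordant monotone functions `f, g`,
`E[f(X_I) g(X_J)] ≤ E[f(X_I)] E[g(X_J)]`. -/
def NegAssoc {Ω ι : Type*} [MeasurableSpace Ω] (μ : Measure Ω) (X : ι → Ω → ℝ) : Prop :=
  ∀ (I J : Finset ι), Disjoint I J →
    ∀ (f : (↥I → ℝ) → ℝ) (g : (↥J → ℝ) → ℝ),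
      ((Monotone f ∧ Monotone g) ∨ (Antitone f ∧ Antitone g)) →
      (∫ ω, f (fun i => X i.1 ω) * g (fun j => X j.1 ω) ∂μ) ≤
        (∫ ω, f (fun i => X i.1 ω) ∂μ) * (∫ ω, g (fun j => X j.1 ω) ∂μ)

open MeasureTheory ProbabilityTheory
open scoped ENNReal
open Finset

section NAaux

lemma choose_step (k r s : ℕ) (h : s ≤ r) :
    k.choose (r+1) * k.choose s ≤ k.choose r * k.choose (s+1) := by
  have h1 : k.choose (r+1) * (r+1) = k.choose r * (k - r) := Nat.choose_succ_right_eq k r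
  have h2 : k.choose (s+1) * (s+1) = k.choose s * (k - s) := Nat.choose_succ_right_eq k s
  have key : (k.choose (r+1) * k.choose s) * ((r+1)*(s+1)) ≤
      (k.choose r * k.choose (s+1)) * ((r+1)*(s+1)) := by
    calc (k.choose (r+1) * k.choose s) * ((r+1)*(s+1))
        = (k.choose (r+1) * (r+1)) * (k.choose s * (s+1)) := by ring
      _ = (k.choose r * (k - r)) * (k.choose s * (s+1)) := by rw [h1]
      _ = (k.choose r * k.choose s) * ((k - r) * (s+1)) := by ring
      _ ≤ (k.choose r * k.choose s) * ((k - s) * (r+1)) := by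
          apply Nat.mul_le_mul_left
          exact Nat.mul_le_mul (Nat.sub_le_sub_left h k) (Nat.succ_le_succ h)
      _ = (k.choose r * (k.choose s * (k - s))) * (r+1) := by ring
      _ = (k.choose r * (k.choose (s+1) * (s+1))) * (r+1) := by rw [h2]
      _ = (k.choose r * k.choose (s+1)) * ((r+1)*(s+1)) := by ring
  exact Nat.le_of_mul_le_mul_right key (by positivity)

lemma choose_lc (k : ℕ) : ∀ (t α' β : ℕ), β + t ≤ α' →
    k.choose (α' + t) * k.choose β ≤ k.choose α' * k.choose (β + t) := by
  intro t
  induction t with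
  | zero => intro α' β _; simp
  | succ t ih =>
    intro α' β hle
    calc k.choose (α' + (t+1)) * k.choose β
        = k.choose ((α' + t) + 1) * k.choose β := by ring_nf
      _ ≤ k.choose (α' + t) * k.choose (β + 1) := choose_step k (α'+t) β (by omega)
      _ ≤ k.choose α' * k.choose ((β+1) + t) := ih α' (β+1) (by omega)
      _ = k.choose α' * k.choose (β + (t+1)) := by ring_nf

lemma choose_lc' (k α β γ δ : ℕ) (h1 : β ≤ γ) (h2 : β ≤ δ) (hsum : α + β = γ + δ) :
    k.choose α * k.choose β ≤ k.choose γ * k.choose δ := by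
  rcases le_total γ δ with h | h
  · have ht : α = δ + (γ - β) := by omega
    have := choose_lc k (γ - β) δ β (by omega)
    rw [ht]
    calc k.choose (δ + (γ - β)) * k.choose β ≤ k.choose δ * k.choose (β + (γ - β)) := this
      _ = k.choose γ * k.choose δ := by rw [Nat.add_sub_cancel' h1]; ring
  · have ht : α = γ + (δ - β) := by omega
    have := choose_lc k (δ - β) γ β (by omega)
    rw [ht]
    calc k.choose (γ + (δ - β)) * k.choose β ≤ k.choose γ * k.choose (β + (δ - β)) := this
      _ = k.choose γ * k.choose δ := by rw [Nat.add_sub_cancel' h2]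

def NAw (d k n m : ℕ) : ℕ := if n + m ≤ d then k.choose (d - n - m) else 0

lemma NAw_rr2 (d k : ℕ) {n n' m m' : ℕ} (hn : n ≤ n') (hm : m ≤ m') :
    NAw d k n m * NAw d k n' m' ≤ NAw d k n m' * NAw d k n' m := by
  unfold NAw
  by_cases h : n' + m' ≤ d
  · have h1 : n + m ≤ d := by omega
    have h2 : n + m' ≤ d := by omega
    have h3 : n' + m ≤ d := by omega
    simp only [if_pos h, if_pos h1, if_pos h2, if_pos h3]
    exact choose_lc' k (d - n - m) (d - n' - m') (d - n - m') (d - n' - m)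
      (by omega) (by omega) (by omega)
  · simp only [if_neg h, mul_zero]
    exact Nat.zero_le _

section
variable {α : Type*} [DecidableEq α]

lemma updown (I : Finset α) (n : ℕ) (g : Finset α → ℝ) :
    ∑ a ∈ powersetCard n I, ∑ x ∈ I \ a, g (insert x a)
      = ∑ b ∈ powersetCard (n+1) I, ((n:ℝ)+1) * g b := by
  rw [Finset.sum_sigma']
  have rhs : ∑ b ∈ powersetCard (n+1) I, ((n:ℝ)+1) * g b
      = ∑ p ∈ (powersetCard (n+1) I).sigma (fun b => b), g p.1 := by
    rw [Finset.sum_sigma]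
    apply Finset.sum_congr rfl
    intro b hb
    rw [Finset.mem_powersetCard] at hb
    simp only [Finset.sum_const, hb.2, nsmul_eq_mul]
    push_cast
    ring
  rw [rhs]
  apply Finset.sum_nbij' (fun p => (⟨insert p.2 p.1, p.2⟩ : Σ _ : Finset α, α))
    (fun p => (⟨p.1.erase p.2, p.2⟩ : Σ _ : Finset α, α))
  · rintro ⟨a, x⟩ hp
    rw [Finset.mem_sigma] at hp ⊢
    obtain ⟨ha, hx⟩ := hp
    rw [Finset.mem_powersetCard] at ha ⊢
    rw [Finset.mem_sdiff] at hx
    refine ⟨⟨?_, ?_⟩, Finset.mem_insert_self _ _⟩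
    · exact Finset.insert_subset hx.1 ha.1
    · rw [Finset.card_insert_of_notMem hx.2, ha.2]
  · rintro ⟨b, x⟩ hp
    rw [Finset.mem_sigma] at hp ⊢
    obtain ⟨hb, hx⟩ := hp
    rw [Finset.mem_powersetCard] at hb ⊢
    refine ⟨⟨(Finset.erase_subset _ _).trans hb.1, ?_⟩, ?_⟩
    · rw [Finset.card_erase_of_mem hx, hb.2]
      omega
    · rw [Finset.mem_sdiff]
      exact ⟨hb.1 hx, Finset.notMem_erase _ _⟩
  · rintro ⟨a, x⟩ hp
    rw [Finset.mem_sigma, Finset.mem_sdiff] at hp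
    simp only
    rw [Finset.erase_insert hp.2.2]
  · rintro ⟨b, x⟩ hp
    rw [Finset.mem_sigma] at hp
    simp only
    rw [Finset.insert_erase hp.2]
  · rintro ⟨a, x⟩ _
    rfl

lemma Fstep (I : Finset α) (φ : Finset α → ℝ) (hφ : ∀ a b : Finset α, a ⊆ b → φ a ≤ φ b)
    (n : ℕ) (hn : n < I.card) :
    ((I.card - n : ℕ) : ℝ) * ∑ a ∈ powersetCard n I, φ a
      ≤ ((n:ℝ)+1) * ∑ b ∈ powersetCard (n+1) I, φ b := by
  rw [Finset.mul_sum, Finset.mul_sum]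
  calc ∑ a ∈ powersetCard n I, ((I.card - n : ℕ) : ℝ) * φ a
      = ∑ a ∈ powersetCard n I, ∑ x ∈ I \ a, φ a := by
        apply Finset.sum_congr rfl
        intro a ha
        rw [Finset.sum_const]
        rw [Finset.mem_powersetCard] at ha
        rw [Finset.card_sdiff_of_subset ha.1, ha.2, nsmul_eq_mul]
    _ ≤ ∑ a ∈ powersetCard n I, ∑ x ∈ I \ a, φ (insert x a) := by
        apply Finset.sum_le_sum
        intro a _
        apply Finset.sum_le_sum
        intro x _
        exact hφ _ _ (Finset.subset_insert _ _)
    _ = ∑ b ∈ powersetCard (n+1) I, ((n:ℝ)+1) * φ b := updown I n φ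

lemma Phi_step (I : Finset α) (φ : Finset α → ℝ) (hφ : ∀ a b : Finset α, a ⊆ b → φ a ≤ φ b)
    (n : ℕ) (hn : n < I.card) :
    (∑ a ∈ powersetCard n I, φ a) / (I.card.choose n : ℝ)
      ≤ (∑ a ∈ powersetCard (n+1) I, φ a) / (I.card.choose (n+1) : ℝ) := by
  have hc : (0:ℝ) < (I.card.choose n : ℝ) := by
    exact_mod_cast Nat.choose_pos (le_of_lt hn)
  have hc' : (0:ℝ) < (I.card.choose (n+1) : ℝ) := by
    exact_mod_cast Nat.choose_pos hn
  rw [div_le_div_iff₀ hc hc']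
  have key := Fstep I φ hφ n hn
  have id : (I.card.choose (n+1) : ℝ) * ((n:ℝ)+1) = (I.card.choose n : ℝ) * ((I.card - n : ℕ) : ℝ) := by
    exact_mod_cast congrArg (Nat.cast : ℕ → ℝ) (Nat.choose_succ_right_eq I.card n)
  have h2 : (∑ a ∈ powersetCard n I, φ a) * (I.card.choose (n+1) : ℝ) * ((n:ℝ)+1)
      ≤ (∑ a ∈ powersetCard (n+1) I, φ a) * (I.card.choose n : ℝ) * ((n:ℝ)+1) := by
    calc (∑ a ∈ powersetCard n I, φ a) * (I.card.choose (n+1) : ℝ) * ((n:ℝ)+1)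
        = (I.card.choose n : ℝ) * (((I.card - n : ℕ) : ℝ) * ∑ a ∈ powersetCard n I, φ a) := by
          rw [mul_assoc, id]; ring
      _ ≤ (I.card.choose n : ℝ) * (((n:ℝ)+1) * ∑ b ∈ powersetCard (n+1) I, φ b) := by
          apply mul_le_mul_of_nonneg_left key (le_of_lt hc)
      _ = (∑ a ∈ powersetCard (n+1) I, φ a) * (I.card.choose n : ℝ) * ((n:ℝ)+1) := by ring
  have hpos : (0:ℝ) < (n:ℝ)+1 := by positivity
  exact le_of_mul_le_mul_right (by linarith [h2]) hpos

lemma Phi_mono (I : Finset α) (φ : Finset α → ℝ) (hφ : ∀ a b : Finset α, a ⊆ b → φ a ≤ φ b)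
    (n : ℕ) : ∀ n', n ≤ n' → n' ≤ I.card →
    (∑ a ∈ powersetCard n I, φ a) / (I.card.choose n : ℝ)
      ≤ (∑ a ∈ powersetCard n' I, φ a) / (I.card.choose n' : ℝ) := by
  intro n'
  induction n' with
  | zero =>
    intro h h'
    have hn0 : n = 0 := by omega
    subst hn0
    exact le_refl _
  | succ m ih =>
    intro h h'
    rcases Nat.lt_or_ge n (m+1) with hlt | hge
    · have h1 : n ≤ m := by omega
      calc _ ≤ (∑ a ∈ powersetCard m I, φ a) / (I.card.choose m : ℝ) := ih h1 (by omega)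
        _ ≤ _ := Phi_step I φ hφ m (by omega)
    · have : n = m+1 := by omega
      subst this
      exact le_refl _

end

section
variable {α : Type*} [DecidableEq α] [Fintype α]

lemma fiber_card (d : ℕ) (I J : Finset α) (hIJ : Disjoint I J)
    (a b : Finset α) (ha : a ⊆ I) (hb : b ⊆ J) :
    ((powersetCard d (univ : Finset α)).filter (fun s => (s ∩ I, s ∩ J) = (a, b))).card
      = NAw d ((I ∪ J)ᶜ).card a.card b.card := by
  have hab : Disjoint a b := hIJ.mono ha hb
  by_cases hle : a.card + b.card ≤ d
  · rw [NAw, if_pos hle]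
    rw [← Finset.card_powersetCard (d - a.card - b.card) ((I ∪ J)ᶜ)]
    apply Finset.card_bij' (fun s _ => s \ (I ∪ J)) (fun c _ => a ∪ b ∪ c)
    · intro s hs
      rw [Finset.mem_filter, Finset.mem_powersetCard, Prod.mk.injEq] at hs
      obtain ⟨⟨_, hcard⟩, hsa, hsb⟩ := hs
      rw [Finset.mem_powersetCard]
      constructor
      · intro x hx
        rw [Finset.mem_sdiff] at hx
        rw [Finset.mem_compl]
        exact hx.2
      · have h1 : (s ∩ (I ∪ J)).card + (s \ (I ∪ J)).card = s.card :=
          Finset.card_inter_add_card_sdiff s (I ∪ J)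
        have h2 : s ∩ (I ∪ J) = a ∪ b := by
          rw [Finset.inter_union_distrib_left, hsa, hsb]
        rw [h2, Finset.card_union_of_disjoint hab] at h1
        omega
    · intro c hc
      rw [Finset.mem_powersetCard] at hc
      obtain ⟨hcU, hccard⟩ := hc
      have hcIJ : ∀ x ∈ c, x ∉ I ∪ J := by
        intro x hx
        have := hcU hx
        rwa [Finset.mem_compl] at this
      have hac : Disjoint a c := by
        rw [Finset.disjoint_left]
        intro x hxa hxc
        exact hcIJ x hxc (Finset.mem_union_left _ (ha hxa))
      have hbc : Disjoint b c := by
        rw [Finset.disjoint_left]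
        intro x hxb hxc
        exact hcIJ x hxc (Finset.mem_union_right _ (hb hxb))
      rw [Finset.mem_filter, Finset.mem_powersetCard, Prod.mk.injEq]
      refine ⟨⟨Finset.subset_univ _, ?_⟩, ?_, ?_⟩
      · rw [Finset.card_union_of_disjoint (by
          rw [Finset.disjoint_union_left]; exact ⟨hac, hbc⟩),
          Finset.card_union_of_disjoint hab, hccard]
        omega
      · ext x
        simp only [Finset.mem_inter, Finset.mem_union]
        constructor
        · rintro ⟨(hx | hx) | hx, hxI⟩
          · exact hx
          · exact absurd hxI (Finset.disjoint_left.mp hIJ.symm (hb hx))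
          · exact absurd (Finset.mem_union_left _ hxI) (hcIJ x hx)
        · intro hx
          exact ⟨Or.inl (Or.inl hx), ha hx⟩
      · ext x
        simp only [Finset.mem_inter, Finset.mem_union]
        constructor
        · rintro ⟨(hx | hx) | hx, hxJ⟩
          · exact absurd hxJ (Finset.disjoint_left.mp hIJ (ha hx))
          · exact hx
          · exact absurd (Finset.mem_union_right _ hxJ) (hcIJ x hx)
        · intro hx
          exact ⟨Or.inl (Or.inr hx), hb hx⟩
    · intro s hs
      rw [Finset.mem_filter, Prod.mk.injEq] at hs
      obtain ⟨_, hsa, hsb⟩ := hs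
      rw [← hsa, ← hsb]
      ext x
      simp only [Finset.mem_union, Finset.mem_inter, Finset.mem_sdiff]
      tauto
    · intro c hc
      rw [Finset.mem_powersetCard] at hc
      have hcIJ : ∀ x ∈ c, x ∉ I ∪ J := by
        intro x hx
        have := hc.1 hx
        rwa [Finset.mem_compl] at this
      ext x
      simp only [Finset.mem_sdiff, Finset.mem_union]
      constructor
      · rintro ⟨(hx | hx) | hx, hxn⟩
        · exact absurd (Or.inl (ha hx)) hxn
        · exact absurd (Or.inr (hb hx)) hxn
        · exact hx
      · intro hx
        refine ⟨Or.inr hx, ?_⟩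
        have := hcIJ x hx
        rw [Finset.mem_union] at this
        exact this
  · rw [NAw, if_neg hle]
    rw [Finset.card_eq_zero, Finset.eq_empty_iff_forall_notMem]
    intro s hs
    rw [Finset.mem_filter, Finset.mem_powersetCard, Prod.mk.injEq] at hs
    obtain ⟨⟨_, hcard⟩, hsa, hsb⟩ := hs
    have hsub : a ∪ b ⊆ s := by
      rw [← hsa, ← hsb]
      intro x hx
      rw [Finset.mem_union, Finset.mem_inter, Finset.mem_inter] at hx
      rcases hx with ⟨h1, _⟩ | ⟨h1, _⟩ <;> exact h1
    have := Finset.card_le_card hsub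
    rw [Finset.card_union_of_disjoint hab, hcard] at this
    omega

lemma C1 (d : ℕ) (I J : Finset α) (hIJ : Disjoint I J) (h : Finset α → Finset α → ℝ) :
    ∑ s ∈ powersetCard d (univ : Finset α), h (s ∩ I) (s ∩ J)
      = ∑ n ∈ range (I.card+1), ∑ m ∈ range (J.card+1),
          ∑ a ∈ powersetCard n I, ∑ b ∈ powersetCard m J,
            (NAw d ((I ∪ J)ᶜ).card n m : ℝ) * h a b := by
  have hmaps : ∀ s ∈ powersetCard d (univ : Finset α),
      (s ∩ I, s ∩ J) ∈ I.powerset ×ˢ J.powerset := by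
    intro s _
    rw [Finset.mem_product, Finset.mem_powerset, Finset.mem_powerset]
    exact ⟨Finset.inter_subset_right, Finset.inter_subset_right⟩
  rw [← Finset.sum_fiberwise_of_maps_to hmaps (fun s => h (s ∩ I) (s ∩ J))]
  rw [Finset.sum_product]
  rw [Finset.sum_powerset]
  apply Finset.sum_congr rfl
  intro n _
  rw [Finset.sum_comm, Finset.sum_powerset]
  apply Finset.sum_congr rfl
  intro m _
  rw [Finset.sum_comm]
  apply Finset.sum_congr rfl
  intro a hma
  rw [Finset.mem_powersetCard] at hma
  apply Finset.sum_congr rfl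
  intro b hmb
  rw [Finset.mem_powersetCard] at hmb
  have inner : ∑ s ∈ (powersetCard d (univ : Finset α)).filter
      (fun s => (s ∩ I, s ∩ J) = (a, b)), h (s ∩ I) (s ∩ J)
      = ∑ s ∈ (powersetCard d (univ : Finset α)).filter
      (fun s => (s ∩ I, s ∩ J) = (a, b)), h a b := by
    apply Finset.sum_congr rfl
    intro s hs
    rw [Finset.mem_filter, Prod.mk.injEq] at hs
    rw [hs.2.1, hs.2.2]
  rw [inner, Finset.sum_const, fiber_card d I J hIJ a b hma.1 hmb.1, hma.2, hmb.2,
    nsmul_eq_mul]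

end

lemma quad_factor (A B : Finset ℕ) (f g : ℕ → ℕ → ℝ) :
    ∑ n ∈ A, ∑ n' ∈ A, ∑ m ∈ B, ∑ m' ∈ B, f n m * g n' m'
      = (∑ n ∈ A, ∑ m ∈ B, f n m) * (∑ n ∈ A, ∑ m ∈ B, g n m) := by
  rw [Finset.sum_mul_sum]
  apply Finset.sum_congr rfl
  intro n _
  apply Finset.sum_congr rfl
  intro n' _
  rw [Finset.sum_mul_sum]

lemma neg_cov (A B : Finset ℕ) (u : ℕ → ℕ → ℝ) (Φ Ψ : ℕ → ℝ)
    (hpt : ∀ n ∈ A, ∀ n' ∈ A, ∀ m ∈ B, ∀ m' ∈ B,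
      (Φ n - Φ n') * (Ψ m - Ψ m') * (u n m * u n' m' - u n m' * u n' m) ≤ 0) :
    (∑ n ∈ A, ∑ m ∈ B, u n m * Φ n * Ψ m) * (∑ n ∈ A, ∑ m ∈ B, u n m)
      ≤ (∑ n ∈ A, ∑ m ∈ B, u n m * Φ n) * (∑ n ∈ A, ∑ m ∈ B, u n m * Ψ m) := by
  set P := ∑ n ∈ A, ∑ m ∈ B, u n m * Φ n * Ψ m with hP
  set W := ∑ n ∈ A, ∑ m ∈ B, u n m with hW
  set Q := ∑ n ∈ A, ∑ m ∈ B, u n m * Φ n with hQ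
  set Rr := ∑ n ∈ A, ∑ m ∈ B, u n m * Ψ m with hRr
  set S1 := ∑ n ∈ A, ∑ n' ∈ A, ∑ m ∈ B, ∑ m' ∈ B,
    u n m * u n' m' * (Φ n - Φ n') * (Ψ m - Ψ m') with hS1
  -- (a) S1 = 2 * (P * W - Q * Rr)
  have ha : S1 = 2 * (P * W - Q * Rr) := by
    have e1 : S1 = ∑ n ∈ A, ∑ n' ∈ A, ∑ m ∈ B, ∑ m' ∈ B,
        ((u n m * Φ n * Ψ m) * (u n' m') - (u n m * Φ n) * (u n' m' * Ψ m')
          - (u n m * Ψ m) * (u n' m' * Φ n') + (u n m) * (u n' m' * Φ n' * Ψ m')) := by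
      apply Finset.sum_congr rfl; intro n _
      apply Finset.sum_congr rfl; intro n' _
      apply Finset.sum_congr rfl; intro m _
      apply Finset.sum_congr rfl; intro m' _
      ring
    rw [e1]
    simp only [Finset.sum_add_distrib, Finset.sum_sub_distrib]
    rw [quad_factor A B (fun n m => u n m * Φ n * Ψ m) (fun n m => u n m)]
    rw [quad_factor A B (fun n m => u n m * Φ n) (fun n m => u n m * Ψ m)]
    rw [quad_factor A B (fun n m => u n m * Ψ m) (fun n m => u n m * Φ n)]
    rw [quad_factor A B (fun n m => u n m) (fun n m => u n m * Φ n * Ψ m)]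
    ring
  -- (b) swap identity
  have hb : S1 = ∑ n ∈ A, ∑ n' ∈ A, ∑ m ∈ B, ∑ m' ∈ B,
      u n m' * u n' m * (Φ n - Φ n') * (Ψ m' - Ψ m) := by
    rw [hS1]
    apply Finset.sum_congr rfl; intro n _
    apply Finset.sum_congr rfl; intro n' _
    exact Finset.sum_comm
  -- (c) 2 * S1 ≤ 0
  have hc : S1 + S1 ≤ 0 := by
    calc S1 + S1
        = ∑ n ∈ A, ∑ n' ∈ A, ∑ m ∈ B, ∑ m' ∈ B,
            (Φ n - Φ n') * (Ψ m - Ψ m') * (u n m * u n' m' - u n m' * u n' m) := by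
          nth_rewrite 2 [hb]
          rw [hS1]
          simp only [← Finset.sum_add_distrib]
          apply Finset.sum_congr rfl; intro n _
          apply Finset.sum_congr rfl; intro n' _
          apply Finset.sum_congr rfl; intro m _
          apply Finset.sum_congr rfl; intro m' _
          ring
      _ ≤ 0 := by
          apply Finset.sum_nonpos; intro n hn
          apply Finset.sum_nonpos; intro n' hn'
          apply Finset.sum_nonpos; intro m hm
          apply Finset.sum_nonpos; intro m' hm'
          exact hpt n hn n' hn' m hm m' hm'
  have : P * W - Q * Rr ≤ 0 := by linarith
  linarith

section
variable {α : Type*} [DecidableEq α] [Fintype α]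

theorem B1 (d : ℕ) (I J : Finset α) (hIJ : Disjoint I J)
    (φ ψ : Finset α → ℝ)
    (hφ : ∀ s t : Finset α, s ∩ I ⊆ t ∩ I → φ s ≤ φ t)
    (hψ : ∀ s t : Finset α, s ∩ J ⊆ t ∩ J → ψ s ≤ ψ t) :
    ((powersetCard d (univ : Finset α)).card : ℝ)
        * ∑ s ∈ powersetCard d (univ : Finset α), φ s * ψ s
      ≤ (∑ s ∈ powersetCard d (univ : Finset α), φ s)
        * (∑ s ∈ powersetCard d (univ : Finset α), ψ s) := by
  classical
  set k := ((I ∪ J)ᶜ : Finset α).card with hk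
  set A := range (I.card+1) with hA
  set B := range (J.card+1) with hB
  set F : ℕ → ℝ := fun n => ∑ a ∈ powersetCard n I, φ a with hF
  set G : ℕ → ℝ := fun m => ∑ b ∈ powersetCard m J, ψ b with hG
  set c : ℕ → ℝ := fun n => (I.card.choose n : ℝ) with hc
  set e : ℕ → ℝ := fun m => (J.card.choose m : ℝ) with he
  set Φ : ℕ → ℝ := fun n => F n / c n with hΦ
  set Ψ : ℕ → ℝ := fun m => G m / e m with hΨ
  set u : ℕ → ℕ → ℝ := fun n m => c n * e m * (NAw d k n m : ℝ) with hu
  have hφ' : ∀ a b : Finset α, a ⊆ b → φ a ≤ φ b := fun a b hab =>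
    hφ a b (Finset.inter_subset_inter hab (le_refl I))
  have hψ' : ∀ a b : Finset α, a ⊆ b → ψ a ≤ ψ b := fun a b hab =>
    hψ a b (Finset.inter_subset_inter hab (le_refl J))
  have hφeq : ∀ s : Finset α, φ s = φ (s ∩ I) := by
    intro s
    have h1 : s ∩ I ∩ I = s ∩ I := by rw [Finset.inter_assoc, Finset.inter_self]
    exact le_antisymm (hφ s (s ∩ I) (by rw [h1])) (hφ (s ∩ I) s (by rw [h1]))
  have hψeq : ∀ s : Finset α, ψ s = ψ (s ∩ J) := by
    intro s
    have h1 : s ∩ J ∩ J = s ∩ J := by rw [Finset.inter_assoc, Finset.inter_self]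
    exact le_antisymm (hψ s (s ∩ J) (by rw [h1])) (hψ (s ∩ J) s (by rw [h1]))
  have hcpos : ∀ n ∈ A, (0:ℝ) < c n := by
    intro n hn
    rw [hA, Finset.mem_range] at hn
    simp only [hc]
    exact_mod_cast Nat.choose_pos (by omega)
  have hepos : ∀ m ∈ B, (0:ℝ) < e m := by
    intro m hm
    rw [hB, Finset.mem_range] at hm
    simp only [he]
    exact_mod_cast Nat.choose_pos (by omega)
  -- explicit inner-sum computations
  have pull : ∀ (x : ℝ) (n m : ℕ),
      (∑ a ∈ powersetCard n I, ∑ b ∈ powersetCard m J, x * (φ a * ψ b))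
        = x * ((∑ a ∈ powersetCard n I, φ a) * (∑ b ∈ powersetCard m J, ψ b)) := by
    intro x n m
    calc ∑ a ∈ powersetCard n I, ∑ b ∈ powersetCard m J, x * (φ a * ψ b)
        = ∑ a ∈ powersetCard n I, (x * φ a) * ∑ b ∈ powersetCard m J, ψ b := by
          apply Finset.sum_congr rfl; intro a _
          rw [Finset.mul_sum]
          apply Finset.sum_congr rfl; intro b _
          ring
      _ = (∑ a ∈ powersetCard n I, x * φ a) * ∑ b ∈ powersetCard m J, ψ b := by
          rw [Finset.sum_mul]
      _ = x * ((∑ a ∈ powersetCard n I, φ a) * ∑ b ∈ powersetCard m J, ψ b) := by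
          rw [← Finset.mul_sum]; ring
  have hq_ex : ∀ (x : ℝ) (n m : ℕ),
      (∑ a ∈ powersetCard n I, ∑ b ∈ powersetCard m J, x * φ a)
        = x * (∑ a ∈ powersetCard n I, φ a) * (J.card.choose m : ℝ) := by
    intro x n m
    calc ∑ a ∈ powersetCard n I, ∑ b ∈ powersetCard m J, x * φ a
        = ∑ a ∈ powersetCard n I, (J.card.choose m : ℝ) * (x * φ a) := by
          apply Finset.sum_congr rfl; intro a _
          rw [Finset.sum_const, Finset.card_powersetCard, nsmul_eq_mul]
      _ = (J.card.choose m : ℝ) * ∑ a ∈ powersetCard n I, x * φ a := by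
          rw [← Finset.mul_sum]
      _ = (J.card.choose m : ℝ) * (x * ∑ a ∈ powersetCard n I, φ a) := by
          rw [← Finset.mul_sum]
      _ = x * (∑ a ∈ powersetCard n I, φ a) * (J.card.choose m : ℝ) := by ring
  have hr_ex : ∀ (x : ℝ) (n m : ℕ),
      (∑ a ∈ powersetCard n I, ∑ b ∈ powersetCard m J, x * ψ b)
        = x * (I.card.choose n : ℝ) * (∑ b ∈ powersetCard m J, ψ b) := by
    intro x n m
    calc ∑ a ∈ powersetCard n I, ∑ b ∈ powersetCard m J, x * ψ b
        = ∑ a ∈ powersetCard n I, x * ∑ b ∈ powersetCard m J, ψ b := by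
          apply Finset.sum_congr rfl; intro a _
          rw [← Finset.mul_sum]
      _ = (I.card.choose n : ℝ) * (x * ∑ b ∈ powersetCard m J, ψ b) := by
          rw [Finset.sum_const, Finset.card_powersetCard, nsmul_eq_mul]
      _ = x * (I.card.choose n : ℝ) * (∑ b ∈ powersetCard m J, ψ b) := by ring
  have hw_ex : ∀ (x : ℝ) (n m : ℕ),
      (∑ a ∈ powersetCard n I, ∑ b ∈ powersetCard m J, x * (1:ℝ))
        = x * (I.card.choose n : ℝ) * (J.card.choose m : ℝ) := by
    intro x n m
    simp only [Finset.sum_const, Finset.card_powersetCard, nsmul_eq_mul]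
    push_cast
    ring
  -- the four C1 identities
  have hPsum : ∑ s ∈ powersetCard d (univ : Finset α), φ s * ψ s
      = ∑ n ∈ A, ∑ m ∈ B, (NAw d k n m : ℝ) * F n * G m := by
    have h0 := C1 d I J hIJ (fun a b => φ a * ψ b)
    calc ∑ s ∈ powersetCard d (univ : Finset α), φ s * ψ s
        = ∑ s ∈ powersetCard d (univ : Finset α), φ (s ∩ I) * ψ (s ∩ J) := by
          apply Finset.sum_congr rfl; intro s _; rw [← hφeq s, ← hψeq s]
      _ = ∑ n ∈ A, ∑ m ∈ B, ∑ a ∈ powersetCard n I, ∑ b ∈ powersetCard m J,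
            (NAw d k n m : ℝ) * (φ a * ψ b) := h0
      _ = ∑ n ∈ A, ∑ m ∈ B, (NAw d k n m : ℝ) * F n * G m := by
          apply Finset.sum_congr rfl; intro n _
          apply Finset.sum_congr rfl; intro m _
          calc ∑ a ∈ powersetCard n I, ∑ b ∈ powersetCard m J,
                (NAw d k n m : ℝ) * (φ a * ψ b)
              = (NAw d k n m : ℝ) * ((∑ a ∈ powersetCard n I, φ a)
                  * (∑ b ∈ powersetCard m J, ψ b)) := pull _ n m
            _ = (NAw d k n m : ℝ) * F n * G m := by rw [mul_assoc]
  have hQsum : ∑ s ∈ powersetCard d (univ : Finset α), φ s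
      = ∑ n ∈ A, ∑ m ∈ B, (NAw d k n m : ℝ) * F n * e m := by
    have h0 := C1 d I J hIJ (fun a b => φ a)
    calc ∑ s ∈ powersetCard d (univ : Finset α), φ s
        = ∑ s ∈ powersetCard d (univ : Finset α), φ (s ∩ I) := by
          apply Finset.sum_congr rfl; intro s _; rw [← hφeq s]
      _ = ∑ n ∈ A, ∑ m ∈ B, ∑ a ∈ powersetCard n I, ∑ b ∈ powersetCard m J,
            (NAw d k n m : ℝ) * φ a := h0
      _ = ∑ n ∈ A, ∑ m ∈ B, (NAw d k n m : ℝ) * F n * e m := by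
          apply Finset.sum_congr rfl; intro n _
          apply Finset.sum_congr rfl; intro m _
          exact hq_ex _ n m
  have hRsum : ∑ s ∈ powersetCard d (univ : Finset α), ψ s
      = ∑ n ∈ A, ∑ m ∈ B, (NAw d k n m : ℝ) * c n * G m := by
    have h0 := C1 d I J hIJ (fun a b => ψ b)
    calc ∑ s ∈ powersetCard d (univ : Finset α), ψ s
        = ∑ s ∈ powersetCard d (univ : Finset α), ψ (s ∩ J) := by
          apply Finset.sum_congr rfl; intro s _; rw [← hψeq s]
      _ = ∑ n ∈ A, ∑ m ∈ B, ∑ a ∈ powersetCard n I, ∑ b ∈ powersetCard m J,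
            (NAw d k n m : ℝ) * ψ b := h0
      _ = ∑ n ∈ A, ∑ m ∈ B, (NAw d k n m : ℝ) * c n * G m := by
          apply Finset.sum_congr rfl; intro n _
          apply Finset.sum_congr rfl; intro m _
          exact hr_ex _ n m
  have hWsum : ((powersetCard d (univ : Finset α)).card : ℝ)
      = ∑ n ∈ A, ∑ m ∈ B, (NAw d k n m : ℝ) * c n * e m := by
    have h0 := C1 d I J hIJ (fun a b => (1:ℝ))
    calc ((powersetCard d (univ : Finset α)).card : ℝ)
        = ∑ s ∈ powersetCard d (univ : Finset α), (1:ℝ) := by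
          rw [Finset.sum_const, nsmul_eq_mul, mul_one]
      _ = ∑ n ∈ A, ∑ m ∈ B, ∑ a ∈ powersetCard n I, ∑ b ∈ powersetCard m J,
            (NAw d k n m : ℝ) * 1 := h0
      _ = ∑ n ∈ A, ∑ m ∈ B, (NAw d k n m : ℝ) * c n * e m := by
          apply Finset.sum_congr rfl; intro n _
          apply Finset.sum_congr rfl; intro m _
          exact hw_ex _ n m
  -- rewrite sums in terms of u, Φ, Ψ
  have huP : ∑ n ∈ A, ∑ m ∈ B, u n m * Φ n * Ψ m
      = ∑ n ∈ A, ∑ m ∈ B, (NAw d k n m : ℝ) * F n * G m := by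
    apply Finset.sum_congr rfl; intro n hn
    apply Finset.sum_congr rfl; intro m hm
    have h1 := (hcpos n hn).ne'
    have h2 := (hepos m hm).ne'
    simp only [hu, hΦ, hΨ]
    field_simp
  have huQ : ∑ n ∈ A, ∑ m ∈ B, u n m * Φ n
      = ∑ n ∈ A, ∑ m ∈ B, (NAw d k n m : ℝ) * F n * e m := by
    apply Finset.sum_congr rfl; intro n hn
    apply Finset.sum_congr rfl; intro m hm
    have h1 := (hcpos n hn).ne'
    simp only [hu, hΦ]
    field_simp
  have huR : ∑ n ∈ A, ∑ m ∈ B, u n m * Ψ m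
      = ∑ n ∈ A, ∑ m ∈ B, (NAw d k n m : ℝ) * c n * G m := by
    apply Finset.sum_congr rfl; intro n hn
    apply Finset.sum_congr rfl; intro m hm
    have h2 := (hepos m hm).ne'
    simp only [hu, hΨ]
    field_simp
  have huW : ∑ n ∈ A, ∑ m ∈ B, u n m
      = ∑ n ∈ A, ∑ m ∈ B, (NAw d k n m : ℝ) * c n * e m := by
    apply Finset.sum_congr rfl; intro n _
    apply Finset.sum_congr rfl; intro m _
    simp only [hu]
    ring
  -- RR2 bracket
  have brkt : ∀ n n' m m' : ℕ, n ≤ n' → m ≤ m' → u n m * u n' m' ≤ u n m' * u n' m := by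
    intro n n' m m' hn hm
    have hcast : (NAw d k n m : ℝ) * (NAw d k n' m' : ℝ)
        ≤ (NAw d k n m' : ℝ) * (NAw d k n' m : ℝ) := by
      exact_mod_cast NAw_rr2 d k hn hm
    have hnn : (0:ℝ) ≤ c n * c n' * e m * e m' := by
      simp only [hc, he]; positivity
    calc u n m * u n' m'
        = (c n * c n' * e m * e m') * ((NAw d k n m : ℝ) * (NAw d k n' m' : ℝ)) := by
          simp only [hu]; ring
      _ ≤ (c n * c n' * e m * e m') * ((NAw d k n m' : ℝ) * (NAw d k n' m : ℝ)) :=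
          mul_le_mul_of_nonneg_left hcast hnn
      _ = u n m' * u n' m := by simp only [hu]; ring
  have hΦmono : ∀ n ∈ A, ∀ n' ∈ A, n ≤ n' → Φ n ≤ Φ n' := by
    intro n _ n' hn' h
    rw [hA, Finset.mem_range] at hn'
    exact Phi_mono I φ hφ' n n' h (by omega)
  have hΨmono : ∀ m ∈ B, ∀ m' ∈ B, m ≤ m' → Ψ m ≤ Ψ m' := by
    intro m _ m' hm' h
    rw [hB, Finset.mem_range] at hm'
    exact Phi_mono J ψ hψ' m m' h (by omega)
  have hpt : ∀ n ∈ A, ∀ n' ∈ A, ∀ m ∈ B, ∀ m' ∈ B,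
      (Φ n - Φ n') * (Ψ m - Ψ m') * (u n m * u n' m' - u n m' * u n' m) ≤ 0 := by
    intro n hn n' hn' m hm m' hm'
    rcases le_total n n' with h1 | h1 <;> rcases le_total m m' with h2 | h2
    · have ha : Φ n - Φ n' ≤ 0 := by linarith [hΦmono n hn n' hn' h1]
      have hb : Ψ m - Ψ m' ≤ 0 := by linarith [hΨmono m hm m' hm' h2]
      have hd : u n m * u n' m' - u n m' * u n' m ≤ 0 := by linarith [brkt n n' m m' h1 h2]
      have hX : 0 ≤ (Φ n - Φ n') * (Ψ m - Ψ m') := by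
        have := mul_nonneg (neg_nonneg.2 ha) (neg_nonneg.2 hb)
        rwa [neg_mul_neg] at this
      exact mul_nonpos_of_nonneg_of_nonpos hX hd
    · have ha : Φ n - Φ n' ≤ 0 := by linarith [hΦmono n hn n' hn' h1]
      have hb : 0 ≤ Ψ m - Ψ m' := by linarith [hΨmono m' hm' m hm h2]
      have hd : 0 ≤ u n m * u n' m' - u n m' * u n' m := by linarith [brkt n n' m' m h1 h2]
      exact mul_nonpos_of_nonpos_of_nonneg (mul_nonpos_of_nonpos_of_nonneg ha hb) hd
    · have ha : 0 ≤ Φ n - Φ n' := by linarith [hΦmono n' hn' n hn h1]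
      have hb : Ψ m - Ψ m' ≤ 0 := by linarith [hΨmono m hm m' hm' h2]
      have hd : 0 ≤ u n m * u n' m' - u n m' * u n' m := by linarith [brkt n' n m m' h1 h2]
      exact mul_nonpos_of_nonpos_of_nonneg (mul_nonpos_of_nonneg_of_nonpos ha hb) hd
    · have ha : 0 ≤ Φ n - Φ n' := by linarith [hΦmono n' hn' n hn h1]
      have hb : 0 ≤ Ψ m - Ψ m' := by linarith [hΨmono m' hm' m hm h2]
      have hd : u n m * u n' m' - u n m' * u n' m ≤ 0 := by linarith [brkt n' n m' m h1 h2]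
      exact mul_nonpos_of_nonneg_of_nonpos (mul_nonneg ha hb) hd
  have key := neg_cov A B u Φ Ψ hpt
  rw [huP, huQ, huR, huW] at key
  rw [hPsum, hQsum, hRsum, hWsum]
  calc (∑ n ∈ A, ∑ m ∈ B, (NAw d k n m : ℝ) * c n * e m)
        * ∑ n ∈ A, ∑ m ∈ B, (NAw d k n m : ℝ) * F n * G m
      = (∑ n ∈ A, ∑ m ∈ B, (NAw d k n m : ℝ) * F n * G m)
        * ∑ n ∈ A, ∑ m ∈ B, (NAw d k n m : ℝ) * c n * e m := by ring
    _ ≤ _ := key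
end

section
variable {α : Type*} [DecidableEq α] [Fintype α]

lemma pi_split {β M : Type*} [DecidableEq β] [AddCommMonoid M] (n : ℕ) (t : Finset β)
    (f : (Fin (n+1) → β) → M) :
    ∑ c ∈ Fintype.piFinset (fun _ : Fin (n+1) => t), f c
      = ∑ x ∈ t, ∑ c ∈ Fintype.piFinset (fun _ : Fin n => t), f (Fin.cons x c) := by
  rw [← Finset.sum_product']
  apply Finset.sum_nbij' (fun c => ((c 0, Fin.tail c) : β × (Fin n → β)))
    (fun p => Fin.cons p.1 p.2)
  · intro c hc
    rw [Fintype.mem_piFinset] at hc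
    rw [Finset.mem_product]
    exact ⟨hc 0, by rw [Fintype.mem_piFinset]; intro i; exact hc i.succ⟩
  · intro p hp
    rw [Finset.mem_product, Fintype.mem_piFinset] at hp
    rw [Fintype.mem_piFinset]
    intro i
    refine Fin.cases ?_ ?_ i
    · rw [Fin.cons_zero]; exact hp.1
    · intro i'; rw [Fin.cons_succ]; exact hp.2 i'
  · intro c _
    exact Fin.cons_self_tail c
  · intro p _
    simp [Fin.tail_cons]
  · intro c _
    rw [Fin.cons_self_tail c]

theorem B2 (d : ℕ) (I J : Finset α) (hIJ : Disjoint I J) :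
    ∀ (n : ℕ) (F G : (Fin n → Finset α) → ℝ),
    (∀ c c' : Fin n → Finset α, (∀ l, c l ∩ I ⊆ c' l ∩ I) → F c ≤ F c') →
    (∀ c c' : Fin n → Finset α, (∀ l, c l ∩ J ⊆ c' l ∩ J) → G c ≤ G c') →
    ((powersetCard d (univ : Finset α)).card : ℝ) ^ n
        * ∑ c ∈ Fintype.piFinset (fun _ : Fin n => powersetCard d (univ : Finset α)), F c * G c
      ≤ (∑ c ∈ Fintype.piFinset (fun _ : Fin n => powersetCard d (univ : Finset α)), F c)
        * (∑ c ∈ Fintype.piFinset (fun _ : Fin n => powersetCard d (univ : Finset α)), G c) := by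
  intro n
  induction n with
  | zero =>
    intro F G hF hG
    have hsingle : ∀ h : (Fin 0 → Finset α) → ℝ,
        ∑ c ∈ Fintype.piFinset (fun _ : Fin 0 => powersetCard d (univ : Finset α)), h c
          = h (fun i => i.elim0) := by
      intro h
      have : Fintype.piFinset (fun _ : Fin 0 => powersetCard d (univ : Finset α))
          = {fun i => i.elim0} := by
        ext c
        simp only [Fintype.mem_piFinset, Finset.mem_singleton]
        constructor
        · intro _; funext i; exact i.elim0
        · intro _ i; exact i.elim0
      rw [this, Finset.sum_singleton]
    rw [hsingle (fun c => F c * G c), hsingle F, hsingle G, pow_zero, one_mul]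
  | succ n ih =>
    intro F G hF hG
    set K := powersetCard d (univ : Finset α) with hK
    set N := (K.card : ℝ) with hN
    have hN0 : (0:ℝ) ≤ N := by rw [hN]; positivity
    set F' : (Fin n → Finset α) → ℝ := fun c => ∑ x ∈ K, F (Fin.cons x c) with hF'
    set G' : (Fin n → Finset α) → ℝ := fun c => ∑ x ∈ K, G (Fin.cons x c) with hG'
    have hF'mono : ∀ c c' : Fin n → Finset α, (∀ l, c l ∩ I ⊆ c' l ∩ I) → F' c ≤ F' c' := by
      intro c c' hcc
      apply Finset.sum_le_sum
      intro x _
      apply hF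
      intro l
      refine Fin.cases ?_ ?_ l
      · simp only [Fin.cons_zero]
        exact subset_rfl
      · intro l'; rw [Fin.cons_succ, Fin.cons_succ]; exact hcc l'
    have hG'mono : ∀ c c' : Fin n → Finset α, (∀ l, c l ∩ J ⊆ c' l ∩ J) → G' c ≤ G' c' := by
      intro c c' hcc
      apply Finset.sum_le_sum
      intro x _
      apply hG
      intro l
      refine Fin.cases ?_ ?_ l
      · simp only [Fin.cons_zero]
        exact subset_rfl
      · intro l'; rw [Fin.cons_succ, Fin.cons_succ]; exact hcc l'
    have step1 : ∀ c : Fin n → Finset α,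
        N * ∑ x ∈ K, F (Fin.cons x c) * G (Fin.cons x c) ≤ F' c * G' c := by
      intro c
      exact B1 d I J hIJ (fun s => F (Fin.cons s c)) (fun s => G (Fin.cons s c))
        (fun s t hst => hF _ _ (fun l => Fin.cases (by rw [Fin.cons_zero, Fin.cons_zero]; exact hst) (fun l' => by rw [Fin.cons_succ, Fin.cons_succ]) l))
        (fun s t hst => hG _ _ (fun l => Fin.cases (by rw [Fin.cons_zero, Fin.cons_zero]; exact hst) (fun l' => by rw [Fin.cons_succ, Fin.cons_succ]) l))
    calc N ^ (n+1) * ∑ c ∈ Fintype.piFinset (fun _ : Fin (n+1) => K), F c * G c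
        = N ^ n * ∑ c ∈ Fintype.piFinset (fun _ : Fin n => K),
            N * ∑ x ∈ K, F (Fin.cons x c) * G (Fin.cons x c) := by
          rw [pi_split n K (fun c => F c * G c), Finset.sum_comm, pow_succ, mul_assoc,
            Finset.mul_sum]
      _ ≤ N ^ n * ∑ c ∈ Fintype.piFinset (fun _ : Fin n => K), F' c * G' c := by
          apply mul_le_mul_of_nonneg_left _ (pow_nonneg hN0 n)
          apply Finset.sum_le_sum
          intro c _
          exact step1 c
      _ ≤ (∑ c ∈ Fintype.piFinset (fun _ : Fin n => K), F' c)
          * (∑ c ∈ Fintype.piFinset (fun _ : Fin n => K), G' c) := ih F' G' hF'mono hG'mono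
      _ = (∑ c ∈ Fintype.piFinset (fun _ : Fin (n+1) => K), F c)
          * (∑ c ∈ Fintype.piFinset (fun _ : Fin (n+1) => K), G c) := by
          rw [pi_split n K F, pi_split n K G, Finset.sum_comm (s := K)]
          congr 1
          rw [Finset.sum_comm]
end

end NAaux

/-- In a random bipartite graph where each left node independently connects to a uniformly
random `d`-element subset of the `R` right nodes, the right node degrees are negatively
associated. -/
theorem right_degrees_negAssoc {Ω : Type*} [MeasurableSpace Ω] (μ : Measure Ω)
    [IsProbabilityMeasure μ] (L R d : ℕ) (hL : 0 < L) (hR : 0 < R) (hd : 0 < d)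
    (hdR : d ≤ R)
    (S : Fin L → Ω → Finset (Fin R))
    (hmeas : ∀ l s, MeasurableSet {ω | S l ω = s})
    (hindep : iIndepFun (m := fun _ => ⊤) S μ)
    (hcard : ∀ l ω, (S l ω).card = d)
    (hunif : ∀ l (s : Finset (Fin R)), s.card = d →
      μ {ω | S l ω = s} = 1 / (R.choose d)) :
    NegAssoc μ (fun (j : Fin R) ω =>
      ((Finset.univ.filter (fun l => j ∈ S l ω)).card : ℝ)) := by
  intro I J hIJ f g hmono
  classical
  set K := Finset.powersetCard d (Finset.univ : Finset (Fin R)) with hK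
  set Aset := Fintype.piFinset (fun _ : Fin L => K) with hAset
  have hTmem : ∀ ω : Ω, (fun l => S l ω) ∈ Aset := by
    intro ω
    rw [hAset, Fintype.mem_piFinset]
    intro l
    rw [hK, Finset.mem_powersetCard]
    exact ⟨Finset.subset_univ _, hcard l ω⟩
  set atom : (Fin L → Finset (Fin R)) → Set Ω := fun c => {ω | ∀ l, S l ω = c l} with hatom
  have hatom_meas : ∀ c, MeasurableSet (atom c) := by
    intro c
    have h1 : atom c = ⋂ l, {ω | S l ω = c l} := by
      ext ω; simp only [hatom, Set.mem_setOf_eq, Set.mem_iInter]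
    rw [h1]
    exact MeasurableSet.iInter (fun l => hmeas l (c l))
  have hatom_mu : ∀ c ∈ Aset, μ (atom c) = (1 / (R.choose d : ℝ≥0∞))^L := by
    intro c hc
    have h1 : atom c = ⋂ l, (S l) ⁻¹' {c l} := by
      ext ω; simp only [hatom, Set.mem_setOf_eq, Set.mem_iInter, Set.mem_preimage,
        Set.mem_singleton_iff]
    rw [h1, hindep.meas_iInter (fun l => ⟨{c l}, MeasurableSpace.measurableSet_top, rfl⟩)]
    have hfac : ∀ l : Fin L, μ (S l ⁻¹' {c l}) = 1 / (R.choose d : ℝ≥0∞) := by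
      intro l
      have hcd : (c l).card = d := by
        rw [hAset, Fintype.mem_piFinset] at hc
        have := hc l
        rw [hK, Finset.mem_powersetCard] at this
        exact this.2
      have h2 := hunif l (c l) hcd
      have h3 : (S l) ⁻¹' {c l} = {ω | S l ω = c l} := rfl
      rw [h3, h2]
    rw [Finset.prod_congr rfl (fun l _ => hfac l), Finset.prod_const, Finset.card_univ,
      Fintype.card_fin]
  set q : ℝ := ((R.choose d : ℝ))⁻¹ ^ L with hq
  have hμq : ∀ c ∈ Aset, (μ (atom c)).toReal = q := by
    intro c hc
    rw [hatom_mu c hc, hq, one_div, ENNReal.toReal_pow, ENNReal.toReal_inv,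
      ENNReal.toReal_natCast]
  have hCpos : (0:ℝ) < (R.choose d : ℝ) := by
    exact_mod_cast Nat.choose_pos hdR
  have hqpos : (0:ℝ) < q := by rw [hq]; positivity
  have hint : ∀ h : (Fin L → Finset (Fin R)) → ℝ,
      ∫ ω, h (fun l => S l ω) ∂μ = ∑ c ∈ Aset, h c * q := by
    intro h
    have hfun : (fun ω => h (fun l => S l ω))
        = fun ω => ∑ c ∈ Aset, (atom c).indicator (fun _ => h c) ω := by
      funext ω
      rw [Finset.sum_eq_single_of_mem (fun l => S l ω) (hTmem ω)]
      · rw [Set.indicator_of_mem]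
        intro l
        rfl
      · intro c _ hne
        rw [Set.indicator_of_notMem]
        intro hmem
        exact hne (funext (fun l => (hmem l).symm))
    rw [hfun, MeasureTheory.integral_finset_sum _
      (fun c _ => (MeasureTheory.integrable_const (h c)).indicator (hatom_meas c))]
    apply Finset.sum_congr rfl
    intro c hc
    rw [MeasureTheory.integral_indicator_const _ (hatom_meas c), smul_eq_mul, measureReal_def, hμq c hc,
      mul_comm]
  have hNval : ((K.card : ℝ)) = (R.choose d : ℝ) := by
    rw [hK, Finset.card_powersetCard, Finset.card_univ, Fintype.card_fin]
  have hqN : q * (K.card:ℝ)^L = 1 := by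
    rw [hNval, hq, ← mul_pow, inv_mul_cancel₀ (ne_of_gt hCpos), one_pow]
  have main : ∀ (f' : (↥I → ℝ) → ℝ) (g' : (↥J → ℝ) → ℝ), Monotone f' → Monotone g' →
      (∫ ω, f' (fun i => ((Finset.univ.filter (fun l => i.1 ∈ S l ω)).card : ℝ))
            * g' (fun j => ((Finset.univ.filter (fun l => j.1 ∈ S l ω)).card : ℝ)) ∂μ)
        ≤ (∫ ω, f' (fun i => ((Finset.univ.filter (fun l => i.1 ∈ S l ω)).card : ℝ)) ∂μ)
          * (∫ ω, g' (fun j => ((Finset.univ.filter (fun l => j.1 ∈ S l ω)).card : ℝ)) ∂μ) := by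
    intro f' g' hf' hg'
    set F : (Fin L → Finset (Fin R)) → ℝ :=
      fun c => f' (fun i => ((Finset.univ.filter (fun l => i.1 ∈ c l)).card : ℝ)) with hFdef
    set G : (Fin L → Finset (Fin R)) → ℝ :=
      fun c => g' (fun j => ((Finset.univ.filter (fun l => j.1 ∈ c l)).card : ℝ)) with hGdef
    have hFmono : ∀ c c' : Fin L → Finset (Fin R), (∀ l, c l ∩ I ⊆ c' l ∩ I) → F c ≤ F c' := by
      intro c c' hcc
      apply hf'
      intro i
      have hsub : Finset.univ.filter (fun l => i.1 ∈ c l)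
          ⊆ Finset.univ.filter (fun l => i.1 ∈ c' l) := by
        intro l hl
        rw [Finset.mem_filter] at hl ⊢
        have h1 : i.1 ∈ c l ∩ I := Finset.mem_inter.2 ⟨hl.2, i.2⟩
        exact ⟨hl.1, (Finset.mem_inter.1 (hcc l h1)).1⟩
      show ((Finset.univ.filter (fun l => i.1 ∈ c l)).card : ℝ)
        ≤ ((Finset.univ.filter (fun l => i.1 ∈ c' l)).card : ℝ)
      exact_mod_cast Finset.card_le_card hsub
    have hGmono : ∀ c c' : Fin L → Finset (Fin R), (∀ l, c l ∩ J ⊆ c' l ∩ J) → G c ≤ G c' := by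
      intro c c' hcc
      apply hg'
      intro j
      have hsub : Finset.univ.filter (fun l => j.1 ∈ c l)
          ⊆ Finset.univ.filter (fun l => j.1 ∈ c' l) := by
        intro l hl
        rw [Finset.mem_filter] at hl ⊢
        have h1 : j.1 ∈ c l ∩ J := Finset.mem_inter.2 ⟨hl.2, j.2⟩
        exact ⟨hl.1, (Finset.mem_inter.1 (hcc l h1)).1⟩
      show ((Finset.univ.filter (fun l => j.1 ∈ c l)).card : ℝ)
        ≤ ((Finset.univ.filter (fun l => j.1 ∈ c' l)).card : ℝ)
      exact_mod_cast Finset.card_le_card hsub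
    have hB2 := B2 d I J hIJ L F G hFmono hGmono
    calc (∫ ω, f' (fun i => ((Finset.univ.filter (fun l => i.1 ∈ S l ω)).card : ℝ))
            * g' (fun j => ((Finset.univ.filter (fun l => j.1 ∈ S l ω)).card : ℝ)) ∂μ)
        = ∑ c ∈ Aset, (F c * G c) * q := hint (fun c => F c * G c)
      _ = q * ∑ c ∈ Aset, F c * G c := by rw [← Finset.sum_mul, mul_comm]
      _ = (q * q) * ((K.card:ℝ)^L * ∑ c ∈ Aset, F c * G c) := by
          have : (q * q) * (K.card:ℝ)^L = q := by
            rw [mul_assoc, hqN, mul_one]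
          rw [← mul_assoc, this]
      _ ≤ (q * q) * ((∑ c ∈ Aset, F c) * (∑ c ∈ Aset, G c)) := by
          apply mul_le_mul_of_nonneg_left hB2 (by positivity)
      _ = (∑ c ∈ Aset, F c * q) * (∑ c ∈ Aset, G c * q) := by
          rw [← Finset.sum_mul, ← Finset.sum_mul]
          ring
      _ = (∫ ω, f' (fun i => ((Finset.univ.filter (fun l => i.1 ∈ S l ω)).card : ℝ)) ∂μ)
          * (∫ ω, g' (fun j => ((Finset.univ.filter (fun l => j.1 ∈ S l ω)).card : ℝ)) ∂μ) := by
          rw [hint F, hint G]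
  rcases hmono with ⟨hf, hg⟩ | ⟨hf, hg⟩
  · exact main f g hf hg
  · have hf' : Monotone (fun v => -(f v)) := fun a b hab => neg_le_neg (hf hab)
    have hg' : Monotone (fun v => -(g v)) := fun a b hab => neg_le_neg (hg hab)
    have hm := main (fun v => -(f v)) (fun v => -(g v)) hf' hg'
    simp only [neg_mul_neg] at hm
    rw [integral_neg, integral_neg, neg_mul_neg] at hm
    exact hm
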